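/- arXiv:2201.06172 — 2 statements merged into one kernel-verified Lean document; each statement's English description precedes it below -/
import Mathlib

section
/- Let p be an odd prime, n ≥ 1, q = p^n, and let F(x) = x^{q − 2} be the inverse power function over GF(q). Let c ∈ GF(q) with c ∉ {0, 1, 4, 4^{-1}}. If χ(c² − 4c) = 1, χ(1 − 4c) = 1, and χ(c) = 1, then the c-differential spectrum of F is given by ω_0 = (q − 1)/2, ω_1 = 3, ω_2 = (q − 9)/2, ω_3 = 2, and ω_i = 0 for i ≥ 4. -/
open Finset

/-- `cdelta F d c b` is the number of `x` in the finite field `F` with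
`(x+1)^d - c * x^d = b`, i.e. the entry `δ_c(b)` of the `c`-DDT of `x ↦ x^d`. -/
noncomputable def cdelta (F : Type*) [Field F] (d : ℕ) (c b : F) : ℕ :=
  Nat.card {x : F // (x + 1) ^ d - c * x ^ d = b}

/-- `comega F d c i` is the number of `b` in `F` with `δ_c(b) = i`,
i.e. the value `ω_i` of the `c`-differential spectrum of `x ↦ x^d`. -/
noncomputable def comega (F : Type*) [Field F] (d : ℕ) (c : F) (i : ℕ) : ℕ :=
  Nat.card {b : F // cdelta F d c b = i}

open scoped Classical in
/-- The quadratic character of `F`, valued in `ℤ`. -/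
noncomputable def chi (F : Type*) [Field F] (x : F) : ℤ :=
  if x = 0 then 0 else if IsSquare x then 1 else -1

section Aux
variable {F : Type*} [Field F] {c : F}

private lemma fiber_iff (hc0 : c ≠ 0) (b x : F) :
    (x + 1)⁻¹ - c * x⁻¹ = b ↔
      (x = 0 ∧ b = 1) ∨ (x = -1 ∧ b = c) ∨ b * (x * x) + (b - 1 + c) * x + c = 0 := by
  by_cases hx0 : x = 0
  · subst hx0
    norm_num
    exact ⟨fun h => Or.inl h.symm, fun h => h.elim (fun h => h.symm) (fun h => absurd h hc0)⟩
  by_cases hx1 : x = -1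
  · subst hx1
    norm_num
    refine ⟨fun h => Or.inl h.symm, fun h => h.elim (fun h => h.symm) (fun h => ?_)⟩
    exact absurd (by linear_combination h) (one_ne_zero (α := F))
  have hx1' : x + 1 ≠ 0 := fun h => hx1 (by linear_combination h)
  constructor
  · intro h
    refine Or.inr (Or.inr ?_)
    field_simp at h
    linear_combination -h
  · rintro (⟨h, -⟩ | ⟨h, -⟩ | h)
    · exact absurd h hx0
    · exact absurd h hx1
    · field_simp
      linear_combination -h

/-- `ddel c b` is the number of solutions of `(x+1)⁻¹ - c * x⁻¹ = b`. -/
noncomputable def ddel (c b : F) : ℕ := Nat.card {x : F // (x + 1)⁻¹ - c * x⁻¹ = b}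

private lemma ddel_eq_ncard (c b : F) :
    ddel c b = ({x : F | (x + 1)⁻¹ - c * x⁻¹ = b}).ncard := Nat.card_coe_set_eq _

private lemma dd_zero (hc0 : c ≠ 0) (hc1 : c ≠ 1) : ddel c 0 = 1 := by
  have h1c : (1 : F) - c ≠ 0 := sub_ne_zero.mpr (fun h => hc1 h.symm)
  have hset : {x : F | (x + 1)⁻¹ - c * x⁻¹ = 0} = {c * (1 - c)⁻¹} := by
    ext x
    simp only [Set.mem_setOf_eq, Set.mem_singleton_iff, fiber_iff hc0]
    constructor
    · rintro (⟨-, h⟩ | ⟨-, h⟩ | h)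
      · exact absurd h.symm one_ne_zero
      · exact absurd h.symm hc0
      · field_simp
        linear_combination -h
    · rintro rfl
      refine Or.inr (Or.inr ?_)
      field_simp
      ring
  rw [ddel_eq_ncard, hset, Set.ncard_singleton]

private lemma dd_one (h2 : (2 : F) ≠ 0) (hc0 : c ≠ 0) (hc1 : c ≠ 1)
    {s1 : F} (hs1 : c ^ 2 - 4 * c = s1 * s1) (hs1ne : s1 ≠ 0) : ddel c 1 = 3 := by
  haveI : NeZero (2 : F) := ⟨h2⟩
  have hd : discrim (1 : F) (1 - 1 + c) c = s1 * s1 := by rw [discrim]; linear_combination hs1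
  set r1 : F := (-(1 - 1 + c) + s1) / (2 * 1) with hr1
  set r2 : F := (-(1 - 1 + c) - s1) / (2 * 1) with hr2
  have hquad : ∀ x : F, (1 : F) * (x * x) + (1 - 1 + c) * x + c = 0 ↔ x = r1 ∨ x = r2 :=
    fun x => quadratic_eq_zero_iff one_ne_zero hd x
  have hroot0 : ∀ x : F, x = r1 ∨ x = r2 → x ≠ 0 := by
    rintro x h rfl
    exact hc0 (by linear_combination (hquad 0).mpr h)
  have hr12 : r1 ≠ r2 := by
    intro h
    rw [hr1, hr2] at h
    field_simp at h
    have h' : s1 * 2 = 0 := by linear_combination h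
    rcases mul_eq_zero.mp h' with h'' | h''
    · exact hs1ne h''
    · exact h2 h''
  have hset : {x : F | (x + 1)⁻¹ - c * x⁻¹ = 1} = {0, r1, r2} := by
    ext x
    simp only [Set.mem_setOf_eq, Set.mem_insert_iff, Set.mem_singleton_iff, fiber_iff hc0]
    constructor
    · rintro (⟨h, -⟩ | ⟨-, h⟩ | h)
      · exact Or.inl h
      · exact absurd h.symm hc1
      · exact Or.inr ((hquad x).mp h)
    · rintro (rfl | h)
      · exact Or.inl ⟨rfl, trivial⟩
      · exact Or.inr (Or.inr ((hquad x).mpr h))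
  rw [ddel_eq_ncard, hset,
    Set.ncard_insert_of_notMem (by rintro (h | h) <;> exact hroot0 0 (by tauto) rfl)
      (Set.toFinite _), Set.ncard_pair hr12]

private lemma dd_cc (h2 : (2 : F) ≠ 0) (hc0 : c ≠ 0) (hc1 : c ≠ 1)
    {s2 : F} (hs2 : 1 - 4 * c = s2 * s2) (hs2ne : s2 ≠ 0) : ddel c c = 3 := by
  haveI : NeZero (2 : F) := ⟨h2⟩
  have hd : discrim c (c - 1 + c) c = s2 * s2 := by rw [discrim]; linear_combination hs2
  set r1 : F := (-(c - 1 + c) + s2) / (2 * c) with hr1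
  set r2 : F := (-(c - 1 + c) - s2) / (2 * c) with hr2
  have hquad : ∀ x : F, c * (x * x) + (c - 1 + c) * x + c = 0 ↔ x = r1 ∨ x = r2 :=
    fun x => quadratic_eq_zero_iff hc0 hd x
  have hroot1 : ∀ x : F, x = r1 ∨ x = r2 → x ≠ -1 := by
    rintro x h rfl
    exact one_ne_zero (α := F) (by linear_combination (hquad (-1)).mpr h)
  have hr12 : r1 ≠ r2 := by
    intro h
    rw [hr1, hr2] at h
    field_simp at h
    have h' : s2 * 2 = 0 := by linear_combination h
    rcases mul_eq_zero.mp h' with h'' | h''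
    · exact hs2ne h''
    · exact h2 h''
  have hset : {x : F | (x + 1)⁻¹ - c * x⁻¹ = c} = {-1, r1, r2} := by
    ext x
    simp only [Set.mem_setOf_eq, Set.mem_insert_iff, Set.mem_singleton_iff, fiber_iff hc0]
    constructor
    · rintro (⟨-, h⟩ | ⟨h, -⟩ | h)
      · exact absurd h hc1
      · exact Or.inl h
      · exact Or.inr ((hquad x).mp h)
    · rintro (rfl | h)
      · exact Or.inr (Or.inl ⟨rfl, trivial⟩)
      · exact Or.inr (Or.inr ((hquad x).mpr h))
  rw [ddel_eq_ncard, hset,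
    Set.ncard_insert_of_notMem (by rintro (h | h) <;> exact hroot1 (-1) (by tauto) rfl)
      (Set.toFinite _), Set.ncard_pair hr12]

private lemma fiber_generic (hc0 : c ≠ 0) {b : F} (hb1 : b ≠ 1) (hbc : b ≠ c) :
    {x : F | (x + 1)⁻¹ - c * x⁻¹ = b} = {x : F | b * (x * x) + (b - 1 + c) * x + c = 0} := by
  ext x
  simp only [Set.mem_setOf_eq, fiber_iff hc0]
  constructor
  · rintro (⟨-, h⟩ | ⟨-, h⟩ | h)
    · exact absurd h hb1
    · exact absurd h hbc
    · exact h
  · exact fun h => Or.inr (Or.inr h)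

private lemma dd_dzero (h2 : (2 : F) ≠ 0) (hc0 : c ≠ 0) {b : F} (hb0 : b ≠ 0) (hb1 : b ≠ 1)
    (hbc : b ≠ c) (hd : discrim b (b - 1 + c) c = 0) : ddel c b = 1 := by
  haveI : NeZero (2 : F) := ⟨h2⟩
  rw [ddel_eq_ncard, fiber_generic hc0 hb1 hbc]
  have hset : {x : F | b * (x * x) + (b - 1 + c) * x + c = 0} = {-(b - 1 + c) / (2 * b)} := by
    ext x
    simp only [Set.mem_setOf_eq, Set.mem_singleton_iff]
    exact quadratic_eq_zero_iff_of_discrim_eq_zero hb0 hd x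
  rw [hset, Set.ncard_singleton]

private lemma dd_sq (h2 : (2 : F) ≠ 0) (hc0 : c ≠ 0) {b : F} (hb0 : b ≠ 0) (hb1 : b ≠ 1)
    (hbc : b ≠ c) {s : F} (hd : discrim b (b - 1 + c) c = s * s) (hs : s ≠ 0) :
    ddel c b = 2 := by
  haveI : NeZero (2 : F) := ⟨h2⟩
  rw [ddel_eq_ncard, fiber_generic hc0 hb1 hbc]
  set r1 : F := (-(b - 1 + c) + s) / (2 * b) with hr1
  set r2 : F := (-(b - 1 + c) - s) / (2 * b) with hr2
  have hset : {x : F | b * (x * x) + (b - 1 + c) * x + c = 0} = {r1, r2} := by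
    ext x
    simp only [Set.mem_setOf_eq, Set.mem_insert_iff, Set.mem_singleton_iff]
    exact quadratic_eq_zero_iff hb0 hd x
  have hr12 : r1 ≠ r2 := by
    intro h
    rw [hr1, hr2] at h
    field_simp at h
    have h' : s * 2 = 0 := by linear_combination h
    rcases mul_eq_zero.mp h' with h'' | h''
    · exact hs h''
    · exact h2 h''
  rw [hset, Set.ncard_pair hr12]

private lemma dd_nsq (hc0 : c ≠ 0) {b : F} (hb1 : b ≠ 1) (hbc : b ≠ c)
    (hd : ¬ IsSquare (discrim b (b - 1 + c) c)) : ddel c b = 0 := by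
  rw [ddel_eq_ncard, fiber_generic hc0 hb1 hbc]
  have hset : {x : F | b * (x * x) + (b - 1 + c) * x + c = 0} = (∅ : Set F) := by
    ext x
    simp only [Set.mem_setOf_eq, Set.mem_empty_iff_false, iff_false]
    exact quadratic_ne_zero_of_discrim_ne_sq (fun s h => hd ⟨s, by rw [h, sq]⟩) x
  rw [hset, Set.ncard_empty]

private lemma sum_ddel [Fintype F] (c : F) : ∑ b : F, ddel c b = Fintype.card F := by
  classical
  have h : ∀ b : F, ddel c b = (univ.filter fun x : F => (x + 1)⁻¹ - c * x⁻¹ = b).card := by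
    intro b
    rw [ddel, Nat.card_eq_fintype_card, Fintype.card_subtype]
  simp_rw [h]
  rw [← Finset.card_univ]
  exact (Finset.card_eq_sum_card_fiberwise (fun x (_ : x ∈ univ) => mem_univ _)).symm

end Aux

theorem stmt_10 (p n : ℕ) (hp : p.Prime) (hpodd : Odd p) (hn : 1 ≤ n)
    (F : Type*) [Field F] [Fintype F] (hF : Fintype.card F = p ^ n)
    (c : F) (hc0 : c ≠ 0) (hc1 : c ≠ 1) (hc4 : c ≠ 4) (hc4i : c ≠ (4 : F)⁻¹)
    (h1 : chi F (c ^ 2 - 4 * c) = 1) (h2 : chi F (1 - 4 * c) = 1) (h3 : chi F c = 1) :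
    comega F (p ^ n - 2) c 0 = (p ^ n - 1) / 2 ∧
    comega F (p ^ n - 2) c 1 = 3 ∧
    comega F (p ^ n - 2) c 2 = (p ^ n - 9) / 2 ∧
    comega F (p ^ n - 2) c 3 = 2 ∧
    ∀ i, 4 ≤ i → comega F (p ^ n - 2) c i = 0 := by
  classical
  -- basic numerology
  have hp3 : 3 ≤ p := by
    have := hp.two_le
    rcases hpodd with ⟨k, hk⟩
    omega
  have hq3 : 3 ≤ p ^ n := le_trans hp3 (Nat.le_self_pow (by omega) p)
  have hqodd : Fintype.card F % 2 = 1 := by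
    rw [hF]
    rcases hpodd with ⟨k, hk⟩
    have hmod : p % 2 = 1 := by omega
    rw [Nat.pow_mod, hmod, Nat.one_pow]
  -- characteristic is odd
  have h2F : (2 : F) ≠ 0 := by
    intro h
    have h2' : ((2 : ℕ) : F) = 0 := by push_cast; exact h
    have hdvd : ringChar F ∣ 2 := (ringChar.spec F 2).mp h2'
    have hne1 : ringChar F ≠ 1 := by
      intro h1'
      have : ((1 : ℕ) : F) = 0 := (ringChar.spec F 1).mpr (h1' ▸ dvd_refl _)
      simpa using this
    have hchar : ringChar F = 2 := by
      rcases (Nat.dvd_prime Nat.prime_two).mp hdvd with h' | h'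
      · exact absurd h' hne1
      · exact h'
    have := FiniteField.even_card_of_char_two hchar
    omega
  haveI : NeZero (2 : F) := ⟨h2F⟩
  -- extract square roots from the chi hypotheses
  have hchi : ∀ a : F, chi F a = 1 → a ≠ 0 ∧ IsSquare a := by
    intro a ha
    unfold chi at ha
    split_ifs at ha with h' h''
    · exact absurd ha (by norm_num)
    · exact ⟨h', h''⟩
  obtain ⟨hAne, s1, hs1⟩ : (c ^ 2 - 4 * c ≠ 0) ∧ ∃ s1 : F, c ^ 2 - 4 * c = s1 * s1 := by
    obtain ⟨h', h''⟩ := hchi _ h1; exact ⟨h', h''⟩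
  obtain ⟨hBne, s2, hs2⟩ : ((1 : F) - 4 * c ≠ 0) ∧ ∃ s2 : F, (1 : F) - 4 * c = s2 * s2 := by
    obtain ⟨h', h''⟩ := hchi _ h2; exact ⟨h', h''⟩
  obtain ⟨-, s3, hs3⟩ : (c ≠ 0) ∧ ∃ s3 : F, c = s3 * s3 := by
    obtain ⟨h', h''⟩ := hchi _ h3; exact ⟨h', h''⟩
  have hs1ne : s1 ≠ 0 := fun h => hAne (by rw [hs1, h, mul_zero])
  have hs2ne : s2 ≠ 0 := fun h => hBne (by rw [hs2, h, mul_zero])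
  have hs3ne : s3 ≠ 0 := fun h => hc0 (by rw [hs3, h, mul_zero])
  -- the two roots of the discriminant (as a function of b)
  set b1 : F := c + 1 + 2 * s3 with hb1def
  set b2 : F := c + 1 - 2 * s3 with hb2def
  have hfact : ∀ b : F, discrim b (b - 1 + c) c = (b - b1) * (b - b2) := by
    intro b
    rw [discrim, hb1def, hb2def]
    linear_combination (-4 : F) * hs3
  have h4 : (2 : F) * 2 ≠ 0 := mul_ne_zero h2F h2F
  have hb12 : b1 ≠ b2 := by
    intro h
    rw [hb1def, hb2def] at h
    have h' : s3 * (2 * 2) = 0 := by linear_combination h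
    rcases mul_eq_zero.mp h' with h'' | h''
    · exact hs3ne h''
    · exact h4 h''
  -- discriminant values at the special points
  have hD1 : discrim (1 : F) (1 - 1 + c) c = s1 * s1 := by rw [discrim]; linear_combination hs1
  have hD1ne : discrim (1 : F) (1 - 1 + c) c ≠ 0 := by
    rw [hD1]; exact mul_ne_zero hs1ne hs1ne
  have hDc : discrim c (c - 1 + c) c = s2 * s2 := by rw [discrim]; linear_combination hs2
  have hDcne : discrim c (c - 1 + c) c ≠ 0 := by
    rw [hDc]; exact mul_ne_zero hs2ne hs2ne
  have hc1' : c - 1 ≠ 0 := sub_ne_zero.mpr hc1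
  have hD0ne : discrim (0 : F) (0 - 1 + c) c ≠ 0 := by
    rw [discrim]
    intro h
    have h' : (c - 1) ^ 2 = 0 := by linear_combination h
    exact hc1' (pow_eq_zero_iff (two_ne_zero) |>.mp h')
  have hbprop : ∀ b : F, (b = b1 ∨ b = b2) →
      b ≠ 0 ∧ b ≠ 1 ∧ b ≠ c ∧ discrim b (b - 1 + c) c = 0 := by
    intro b hb
    have hDzero : discrim b (b - 1 + c) c = 0 := by
      rw [hfact]
      rcases hb with rfl | rfl
      · simp
      · simp
    refine ⟨?_, ?_, ?_, hDzero⟩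
    · rintro rfl; exact hD0ne hDzero
    · rintro rfl; exact hD1ne hDzero
    · rintro rfl; exact hDcne hDzero
  obtain ⟨hb1_0, hb1_1, hb1_c, -⟩ := hbprop b1 (Or.inl rfl)
  obtain ⟨hb2_0, hb2_1, hb2_c, -⟩ := hbprop b2 (Or.inr rfl)
  -- full classification of the values of ddel
  have hval : ∀ b : F,
      (ddel c b = 1 ∧ (b = 0 ∨ b = b1 ∨ b = b2)) ∨
      (ddel c b = 3 ∧ (b = 1 ∨ b = c)) ∨
      ((ddel c b = 0 ∨ ddel c b = 2) ∧ ¬(b = 0 ∨ b = b1 ∨ b = b2) ∧ ¬(b = 1 ∨ b = c)) := by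
    intro b
    by_cases hb0 : b = 0
    · subst hb0; exact Or.inl ⟨dd_zero hc0 hc1, Or.inl rfl⟩
    by_cases hb1 : b = 1
    · subst hb1; exact Or.inr (Or.inl ⟨dd_one h2F hc0 hc1 hs1 hs1ne, Or.inl rfl⟩)
    by_cases hbc : b = c
    · subst hbc; exact Or.inr (Or.inl ⟨dd_cc h2F hc0 hc1 hs2 hs2ne, Or.inr rfl⟩)
    by_cases hbd : discrim b (b - 1 + c) c = 0
    · have hz : (b - b1) * (b - b2) = 0 := by rw [← hfact]; exact hbd
      have hb12' : b = b1 ∨ b = b2 := by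
        rcases mul_eq_zero.mp hz with h' | h'
        · exact Or.inl (sub_eq_zero.mp h')
        · exact Or.inr (sub_eq_zero.mp h')
      exact Or.inl ⟨dd_dzero h2F hc0 hb0 hb1 hbc hbd, Or.inr hb12'⟩
    have hnmem1 : ¬(b = 0 ∨ b = b1 ∨ b = b2) := by
      rintro (h' | h' | h')
      · exact hb0 h'
      · exact hbd (hbprop b (Or.inl h')).2.2.2
      · exact hbd (hbprop b (Or.inr h')).2.2.2
    have hnmem3 : ¬(b = 1 ∨ b = c) := by
      rintro (h' | h')
      · exact hb1 h'
      · exact hbc h'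
    by_cases hsq : IsSquare (discrim b (b - 1 + c) c)
    · obtain ⟨s, hs⟩ := hsq
      have hsne : s ≠ 0 := fun h => hbd (by rw [hs, h, mul_zero])
      exact Or.inr (Or.inr ⟨Or.inr (dd_sq h2F hc0 hb0 hb1 hbc hs hsne), hnmem1, hnmem3⟩)
    · exact Or.inr (Or.inr ⟨Or.inl (dd_nsq hc0 hb1 hbc hsq), hnmem1, hnmem3⟩)
  -- the level sets of ddel
  have hset1 : {b : F | ddel c b = 1} = {0, b1, b2} := by
    ext b
    simp only [Set.mem_setOf_eq, Set.mem_insert_iff, Set.mem_singleton_iff]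
    constructor
    · intro h
      rcases hval b with ⟨h', hm⟩ | ⟨h', hm⟩ | ⟨h', hm, hn'⟩
      · exact hm
      · omega
      · rcases h' with h' | h' <;> omega
    · intro hm
      rcases hval b with ⟨h', -⟩ | ⟨-, hm'⟩ | ⟨-, hn', -⟩
      · exact h'
      · exfalso
        rcases hm' with rfl | rfl
        · rcases hm with h' | h' | h'
          · exact one_ne_zero h'
          · exact hb1_1 h'.symm
          · exact hb2_1 h'.symm
        · rcases hm with h' | h' | h'
          · exact hc0 h'
          · exact hb1_c h'.symm
          · exact hb2_c h'.symm
      · exact absurd hm hn'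
  have hset3 : {b : F | ddel c b = 3} = {1, c} := by
    ext b
    simp only [Set.mem_setOf_eq, Set.mem_insert_iff, Set.mem_singleton_iff]
    constructor
    · intro h
      rcases hval b with ⟨h', hm⟩ | ⟨h', hm⟩ | ⟨h', hm, hn'⟩
      · omega
      · exact hm
      · rcases h' with h' | h' <;> omega
    · intro hm
      rcases hval b with ⟨-, hm'⟩ | ⟨h', -⟩ | ⟨-, -, hn'⟩
      · exfalso
        rcases hm with rfl | rfl
        · rcases hm' with h' | h' | h'
          · exact one_ne_zero h'
          · exact hb1_1 h'.symm
          · exact hb2_1 h'.symm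
        · rcases hm' with h' | h' | h'
          · exact hc0 h'
          · exact hb1_c h'.symm
          · exact hb2_c h'.symm
      · exact h'
      · exact absurd hm hn'
  -- relating cdelta to ddel
  have hpow : ∀ x : F, x ^ (p ^ n - 2) = x⁻¹ := by
    intro x
    by_cases hx : x = 0
    · subst hx
      rw [inv_zero]
      exact zero_pow (by omega)
    · have h1' := FiniteField.pow_card_sub_one_eq_one x hx
      rw [hF] at h1'
      have hmul : x ^ (p ^ n - 2) * x = 1 := by
        rw [← pow_succ]
        have heq : p ^ n - 2 + 1 = p ^ n - 1 := by omega
        rw [heq, h1']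
      exact eq_inv_of_mul_eq_one_left hmul
  have hcde : ∀ b, cdelta F (p ^ n - 2) c b = ddel c b := by
    intro b
    unfold cdelta ddel
    simp_rw [hpow]
  have hcome : ∀ i, comega F (p ^ n - 2) c i = ({b : F | ddel c b = i}).ncard := by
    intro i
    unfold comega
    simp_rw [hcde]
    exact Nat.card_coe_set_eq _
  -- bridge to finset cardinalities for the counting argument
  have hbridge : ∀ i, ({b : F | ddel c b = i}).ncard =
      (univ.filter fun b : F => ddel c b = i).card := by
    intro i
    rw [← Set.ncard_coe_finset]
    congr 1
    ext b
    simp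
  have hlt : ∀ b : F, ddel c b < 4 := by
    intro b
    rcases hval b with ⟨h', -⟩ | ⟨h', -⟩ | ⟨h', -, -⟩
    · omega
    · omega
    · rcases h' with h' | h' <;> omega
  have hsum1 : ∑ i ∈ Finset.range 4, (univ.filter fun b : F => ddel c b = i).card = p ^ n := by
    rw [← hF, ← Finset.card_univ]
    exact (Finset.card_eq_sum_card_fiberwise
      (fun b (_ : b ∈ univ) => Finset.mem_range.mpr (hlt b))).symm
  have hsum2 : ∑ i ∈ Finset.range 4,
      (univ.filter fun b : F => ddel c b = i).card * i = p ^ n := by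
    have e1 := sum_ddel (F := F) c
    rw [hF] at e1
    have e2 : ∑ i ∈ Finset.range 4, ∑ b ∈ univ.filter (fun b : F => ddel c b = i), ddel c b
        = ∑ b : F, ddel c b :=
      Finset.sum_fiberwise_of_maps_to (fun b _ => Finset.mem_range.mpr (hlt b)) _
    rw [e1] at e2
    rw [← e2]
    refine Finset.sum_congr rfl (fun i _ => ?_)
    exact (Finset.sum_const_nat (fun b hb => (Finset.mem_filter.mp hb).2)).symm
  -- the individual cardinalities
  have hcard1 : ({b : F | ddel c b = 1}).ncard = 3 := by
    rw [hset1, Set.ncard_insert_of_notMem ?_ (Set.toFinite _), Set.ncard_pair hb12]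
    rintro (h' | h')
    · exact hb1_0 h'.symm
    · exact hb2_0 h'.symm
  have hcard3 : ({b : F | ddel c b = 3}).ncard = 2 := by
    rw [hset3]
    exact Set.ncard_pair (fun h => hc1 h.symm)
  have ha1 : (univ.filter fun b : F => ddel c b = 1).card = 3 := by
    rw [← hbridge]; exact hcard1
  have ha3 : (univ.filter fun b : F => ddel c b = 3).card = 2 := by
    rw [← hbridge]; exact hcard3
  simp only [Finset.sum_range_succ, Finset.sum_range_zero] at hsum1 hsum2
  refine ⟨?_, ?_, ?_, ?_, ?_⟩
  · rw [hcome 0, hbridge 0]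
    omega
  · rw [hcome 1]; exact hcard1
  · rw [hcome 2, hbridge 2]
    omega
  · rw [hcome 3]; exact hcard3
  · intro i hi
    rw [hcome i]
    have hempty : {b : F | ddel c b = i} = (∅ : Set F) := by
      ext b
      simp only [Set.mem_setOf_eq, Set.mem_empty_iff_false, iff_false]
      intro h
      have := hlt b
      omega
    rw [hempty, Set.ncard_empty]
end

section
/- Let n ≥ 2 be an even integer and let G(x) = x^{(3^n + 3)/2} be a power function over GF(3^n). Then the (−1)-differential spectrum of G is given by ω_0 = (3^n − 1)/2, ω_1 = 1, ω_2 = (3^n − 1)/2, and ω_i = 0 for i ≥ 3. (In particular, G is AP(−1)N.) -/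
open Finset

section Aux

variable {F : Type*} [Field F] [Fintype F]

lemma aux_card (p : F → Prop) [DecidablePred p] :
    Nat.card {x : F // p x} = (univ.filter (fun x => p x)).card := by
  rw [Nat.card_eq_fintype_card, Fintype.card_subtype]

lemma eta_pm (e : ℕ) (he : 2 * e = Fintype.card F - 1) {x : F} (hx : x ≠ 0) :
    x ^ e = 1 ∨ x ^ e = -1 := by
  have h1 : (x ^ e) ^ 2 = 1 := by
    rw [← pow_mul, mul_comm e 2, he]
    exact FiniteField.pow_card_sub_one_eq_one x hx
  have h2 : (x ^ e - 1) * (x ^ e + 1) = 0 := by linear_combination h1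
  rcases mul_eq_zero.mp h2 with h | h
  · left; linear_combination h
  · right; linear_combination h

lemma eta_sq (e : ℕ) (he : 2 * e = Fintype.card F - 1) {t : F} (ht : t ≠ 0) :
    (t ^ 2) ^ e = 1 := by
  rw [← pow_mul, he]
  exact FiniteField.pow_card_sub_one_eq_one t ht

lemma key1 (h3 : (3 : F) = 0) (e : ℕ) (he : 2 * e = Fintype.card F - 1)
    (heE : Even e) {y : F} (h : (y + 1) ^ (e + 2) + y ^ (e + 2) = 1) :
    y = 0 ∨ y = -1 := by
  have h12 : (1 : F) ≠ -1 := by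
    intro hh
    exact one_ne_zero (by linear_combination h3 - hh : (1 : F) = 0)
  by_cases hy0 : y = 0
  · exact Or.inl hy0
  by_cases hy1 : y = -1
  · exact Or.inr hy1
  exfalso
  have hy1' : y + 1 ≠ 0 := fun h0 => hy1 (by linear_combination h0)
  rw [pow_add, pow_add] at h
  rcases eta_pm e he hy0 with hc | hc <;> rcases eta_pm e he hy1' with hd | hd <;>
    rw [hc, hd] at h
  · -- y^e = 1, (y+1)^e = 1
    have h5 : y * (y + 1) = 0 := by linear_combination 2 * h + (-y ^ 2 - y) * h3
    rcases mul_eq_zero.mp h5 with h6 | h6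
    · exact hy0 h6
    · exact hy1' h6
  · -- y^e = 1, (y+1)^e = -1
    exact hy1 (by linear_combination h + (y + 1) * h3)
  · -- y^e = -1, (y+1)^e = 1
    exact hy0 (by linear_combination 2 * h + (-y) * h3)
  · -- y^e = -1, (y+1)^e = -1
    have hsq : (y - 1) ^ 2 = 0 := by
      linear_combination (-2) * h + (-y ^ 2 - 2 * y - 1) * h3
    have hy' : y = 1 := by
      have := pow_eq_zero_iff (n := 2) (by norm_num) |>.mp hsq
      linear_combination this
    rw [hy'] at hc
    exact h12 (by simpa using hc)

lemma key (h3 : (3 : F) = 0) (e : ℕ) (he : 2 * e = Fintype.card F - 1)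
    (heE : Even e) {x y : F}
    (h : (x + 1) ^ (e + 2) + x ^ (e + 2) = (y + 1) ^ (e + 2) + y ^ (e + 2)) :
    y = x ∨ y = -1 - x := by
  have h12 : (1 : F) ≠ -1 := by
    intro hh
    exact one_ne_zero (by linear_combination h3 - hh : (1 : F) = 0)
  have hne0 : e + 2 ≠ 0 := by omega
  have hE2 : Even (e + 2) := by
    rcases heE with ⟨k, hk⟩; exact ⟨k + 1, by omega⟩
  by_cases hx0 : x = 0
  · subst hx0
    rw [zero_add, one_pow, zero_pow hne0, add_zero] at h
    rcases key1 h3 e he heE h.symm with h6 | h6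
    · left; rw [h6]
    · right; linear_combination h6
  by_cases hx1 : x = -1
  · subst hx1
    rw [show ((-1 : F) + 1) = 0 by ring, zero_pow hne0, zero_add,
      hE2.neg_one_pow] at h
    rcases key1 h3 e he heE h.symm with h6 | h6
    · right; linear_combination h6
    · left; rw [h6]
  by_cases hy0 : y = 0
  · subst hy0
    rw [zero_add, one_pow, zero_pow hne0, add_zero] at h
    rcases key1 h3 e he heE h with h6 | h6
    · exact absurd h6 hx0
    · right; rw [h6]; ring
  by_cases hy1 : y = -1
  · subst hy1
    rw [show ((-1 : F) + 1) = 0 by ring, zero_pow hne0, zero_add,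
      hE2.neg_one_pow] at h
    rcases key1 h3 e he heE h with h6 | h6
    · right; rw [h6]; ring
    · left; exact h6.symm
  have hx1' : x + 1 ≠ 0 := fun h0 => hx1 (by linear_combination h0)
  have hy1' : y + 1 ≠ 0 := fun h0 => hy1 (by linear_combination h0)
  rw [pow_add, pow_add, pow_add, pow_add] at h
  rcases eta_pm e he hx0 with ha | ha <;> rcases eta_pm e he hx1' with hb | hb <;>
    rcases eta_pm e he hy0 with hc | hc <;> rcases eta_pm e he hy1' with hd | hd <;>
      rw [ha, hb, hc, hd] at h
  · -- (A,A)
    have h5 : (y - x) * (x + y + 1) = 0 := by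
      linear_combination h + (y ^ 2 + y - x ^ 2 - x) * h3
    rcases mul_eq_zero.mp h5 with h6 | h6
    · left; linear_combination h6
    · right; linear_combination h6
  · -- (A,C)
    exfalso
    have h5 : y + 1 = -(x * (x + 1)) := by
      linear_combination 2 * h + (-(x ^ 2 + x + y + 1)) * h3
    have h6 : (y + 1) ^ e = 1 := by
      rw [h5, heE.neg_pow, mul_pow, ha, hb]; norm_num
    exact h12 (by linear_combination hd - h6)
  · -- (A,B)
    exfalso
    have h5 : y = x * (x + 1) := by
      linear_combination h + (y - x ^ 2 - x) * h3
    have h6 : y ^ e = 1 := by rw [h5, mul_pow, ha, hb]; norm_num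
    exact h12 (by linear_combination hc - h6)
  · -- (A,D)
    exfalso
    have h5 : (x + 1) * (y + 1) = -((x + y) ^ 2) := by
      linear_combination 2 * h + (x * y - x ^ 2 - y ^ 2 - x - y - 1) * h3
    have hxy : x + y ≠ 0 := by
      intro h0
      have h7 : (x + 1) * (y + 1) = 0 := by rw [h5, h0]; ring
      rcases mul_eq_zero.mp h7 with h8 | h8
      · exact hx1' h8
      · exact hy1' h8
    have h6 : ((x + 1) * (y + 1)) ^ e = 1 := by
      rw [h5, heE.neg_pow]; exact eta_sq e he hxy
    have h7 : ((x + 1) * (y + 1)) ^ e = -1 := by rw [mul_pow, hb, hd]; ring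
    exact h12 (by linear_combination h7 - h6)
  · -- (C,A)
    exfalso
    have h5 : x + 1 = -(y * (y + 1)) := by
      linear_combination h + (x + y ^ 2 + y + 1) * h3
    have h6 : (x + 1) ^ e = 1 := by
      rw [h5, heE.neg_pow, mul_pow, hc, hd]; norm_num
    exact h12 (by linear_combination hb - h6)
  · -- (C,C)
    left; linear_combination 2 * h + (x - y) * h3
  · -- (C,B)
    right; linear_combination (-2) * h + (-x - y - 1) * h3
  · -- (C,D)
    exfalso
    have h5 : x + 1 = (y - 1) ^ 2 := by
      linear_combination h + (x - y ^ 2) * h3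
    have hyne : y - 1 ≠ 0 := by
      intro h0
      have hy1eq : y = 1 := by linear_combination h0
      rw [hy1eq] at hc
      exact h12 (by simpa using hc)
    have h6 : (x + 1) ^ e = 1 := by rw [h5]; exact eta_sq e he hyne
    exact h12 (by linear_combination hb - h6)
  · -- (B,A)
    exfalso
    have h5 : x = y * (y + 1) := by
      linear_combination 2 * h + (y ^ 2 + y - x) * h3
    have h6 : x ^ e = 1 := by rw [h5, mul_pow, hc, hd]; norm_num
    exact h12 (by linear_combination ha - h6)
  · -- (B,C)
    right; linear_combination 2 * h + (-x - y - 1) * h3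
  · -- (B,B)
    left; linear_combination h + (y - x) * h3
  · -- (B,D)
    exfalso
    have h5 : x = -((y - 1) ^ 2) := by
      linear_combination 2 * h + (-x - y ^ 2 - 2 * y - 1) * h3
    have hyne : y - 1 ≠ 0 := by
      intro h0
      apply hx0
      rw [h5, h0]; ring
    have h6 : x ^ e = 1 := by
      rw [h5, heE.neg_pow]; exact eta_sq e he hyne
    exact h12 (by linear_combination ha - h6)
  · -- (D,A)
    exfalso
    have h5 : (x + 1) * (y + 1) = -((x + y) ^ 2) := by
      linear_combination (-2) * h + (x * y - x ^ 2 - y ^ 2 - x - y - 1) * h3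
    have hxy : x + y ≠ 0 := by
      intro h0
      have h7 : (x + 1) * (y + 1) = 0 := by rw [h5, h0]; ring
      rcases mul_eq_zero.mp h7 with h8 | h8
      · exact hx1' h8
      · exact hy1' h8
    have h6 : ((x + 1) * (y + 1)) ^ e = 1 := by
      rw [h5, heE.neg_pow]; exact eta_sq e he hxy
    have h7 : ((x + 1) * (y + 1)) ^ e = -1 := by rw [mul_pow, hb, hd]; ring
    exact h12 (by linear_combination h7 - h6)
  · -- (D,C)
    exfalso
    have h5 : y + 1 = (x - 1) ^ 2 := by
      linear_combination (-1) * h + (y - x ^ 2) * h3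
    have hxne : x - 1 ≠ 0 := by
      intro h0
      have hx1eq : x = 1 := by linear_combination h0
      rw [hx1eq] at ha
      exact h12 (by simpa using ha)
    have h6 : (y + 1) ^ e = 1 := by rw [h5]; exact eta_sq e he hxne
    exact h12 (by linear_combination hd - h6)
  · -- (D,B)
    exfalso
    have h5 : y = -((x - 1) ^ 2) := by
      linear_combination h + (y + x ^ 2 + 1) * h3
    have hxne : x - 1 ≠ 0 := by
      intro h0
      apply hy0
      rw [h5, h0]; ring
    have h6 : y ^ e = 1 := by
      rw [h5, heE.neg_pow]; exact eta_sq e he hxne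
    exact h12 (by linear_combination hc - h6)
  · -- (D,D)
    have h5 : (y - x) * (x + y + 1) = 0 := by
      linear_combination (-1) * h + (y ^ 2 + y - x ^ 2 - x) * h3
    rcases mul_eq_zero.mp h5 with h6 | h6
    · left; linear_combination h6
    · right; linear_combination h6

end Aux

theorem stmt_11 (n : ℕ) (hn : 2 ≤ n) (hne : Even n)
    (F : Type*) [Field F] [Fintype F] (hF : Fintype.card F = 3 ^ n) :
    comega F ((3 ^ n + 3) / 2) (-1 : F) 0 = (3 ^ n - 1) / 2 ∧
    comega F ((3 ^ n + 3) / 2) (-1 : F) 1 = 1 ∧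
    comega F ((3 ^ n + 3) / 2) (-1 : F) 2 = (3 ^ n - 1) / 2 ∧
    (∀ i, 3 ≤ i → comega F ((3 ^ n + 3) / 2) (-1 : F) i = 0) ∧
    (∀ b, cdelta F ((3 ^ n + 3) / 2) (-1 : F) b ≤ 2) ∧
    (∃ b, cdelta F ((3 ^ n + 3) / 2) (-1 : F) b = 2) := by
  classical
  have hq9 : 9 ≤ 3 ^ n := by
    calc (9 : ℕ) = 3 ^ 2 := by norm_num
    _ ≤ 3 ^ n := Nat.pow_le_pow_right (by norm_num) hn
  have hodd : 3 ^ n % 2 = 1 := by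
    rw [Nat.pow_mod]; simp
  obtain ⟨m, hm⟩ := hne
  have h8 : 3 ^ n % 8 = 1 := by
    rw [hm, ← two_mul, pow_mul, Nat.pow_mod]; norm_num
  obtain ⟨e, he⟩ : ∃ e, 3 ^ n = 2 * e + 1 := ⟨(3 ^ n - 1) / 2, by omega⟩
  have heq : 2 * e = Fintype.card F - 1 := by rw [hF]; omega
  have heE : Even e := by
    obtain ⟨k, hk⟩ : ∃ k, 3 ^ n = 8 * k + 1 := ⟨(3 ^ n - 1) / 8, by omega⟩
    exact ⟨2 * k, by omega⟩
  have hd : (3 ^ n + 3) / 2 = e + 2 := by omega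
  have h3 : (3 : F) = 0 := by
    have hc0 := FiniteField.cast_card_eq_zero F
    rw [hF] at hc0
    push_cast at hc0
    exact pow_eq_zero_iff (by omega : n ≠ 0) |>.mp hc0
  have h12 : (1 : F) ≠ -1 := by
    intro hh
    exact one_ne_zero (by linear_combination h3 - hh : (1 : F) = 0)
  have hne0 : e + 2 ≠ 0 := by omega
  have hE2 : Even (e + 2) := by
    rcases heE with ⟨k, hk⟩; exact ⟨k + 1, by omega⟩
  set f : F → F := fun x => (x + 1) ^ (e + 2) + x ^ (e + 2) with hf
  set del : F → ℕ := fun b => (univ.filter (fun x => f x = b)).card with hdel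
  -- translation lemmas
  have hcd : ∀ b : F, cdelta F ((3 ^ n + 3) / 2) (-1 : F) b = del b := by
    intro b
    have step1 : cdelta F ((3 ^ n + 3) / 2) (-1 : F) b
        = Nat.card {x : F // f x = b} := by
      apply Nat.card_congr
      apply Equiv.subtypeEquivRight
      intro x
      rw [hd]
      constructor
      · intro hh; simp only [hf]; linear_combination hh
      · intro hh; simp only [hf] at hh; linear_combination hh
    rw [step1, aux_card]
  have hco : ∀ i : ℕ, comega F ((3 ^ n + 3) / 2) (-1 : F) i
      = (univ.filter (fun b => del b = i)).card := by
    intro i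
    have step1 : comega F ((3 ^ n + 3) / 2) (-1 : F) i
        = Nat.card {b : F // del b = i} := by
      apply Nat.card_congr
      apply Equiv.subtypeEquivRight
      intro b
      rw [hcd b]
    rw [step1, aux_card]
  -- structure of fibers
  have hF1 : ∀ x : F, f (-1 - x) = f x := by
    intro x
    simp only [hf]
    rw [show (-1 - x + 1 : F) = -x by ring, show (-1 - x : F) = -(x + 1) by ring,
      hE2.neg_pow, hE2.neg_pow, add_comm]
  have hkey : ∀ x y : F, f x = f y → y = x ∨ y = -1 - x := by
    intro x y hxy
    simp only [hf] at hxy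
    exact key h3 e heq heE hxy
  have hfix1 : ∀ x : F, x ≠ 1 → x ≠ -1 - x := by
    intro x hx h0
    exact hx (by linear_combination 2 * h0 + (-x - 1) * h3)
  have hfib2 : ∀ (b : F) (x : F), f x = b → x ≠ 1 →
      univ.filter (fun z => f z = b) = {x, -1 - x} := by
    intro b x hfx hx1
    ext z
    simp only [mem_filter, mem_univ, true_and, mem_insert, mem_singleton]
    constructor
    · intro hz
      exact hkey x z (by rw [hfx, hz])
    · rintro (rfl | rfl)
      · exact hfx
      · rw [hF1 x]; exact hfx
  have hdel2 : ∀ (b : F) (x : F), f x = b → x ≠ 1 → del b = 2 := by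
    intro b x h1 h2
    simp only [hdel]
    rw [hfib2 b x h1 h2, Finset.card_pair (hfix1 x h2)]
  have hdel1 : del (f 1) = 1 := by
    have hm2 : (-1 - 1 : F) = 1 := by linear_combination -h3
    have hfil : univ.filter (fun z => f z = f 1) = {1} := by
      ext z
      simp only [mem_filter, mem_univ, true_and, mem_singleton]
      constructor
      · intro hz
        rcases hkey 1 z hz.symm with h6 | h6
        · exact h6
        · rw [h6, hm2]
      · rintro rfl; rfl
    simp only [hdel]
    rw [hfil, Finset.card_singleton]
  have hdelcases : ∀ b : F, del b = 0 ∨ del b = 1 ∨ del b = 2 := by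
    intro b
    by_cases hb : (univ.filter (fun x => f x = b)).Nonempty
    · obtain ⟨x, hx⟩ := hb
      have hfx : f x = b := (mem_filter.mp hx).2
      by_cases hx1 : x = 1
      · right; left
        rw [← hfx, hx1]
        exact hdel1
      · right; right
        exact hdel2 b x hfx hx1
    · left
      simp only [hdel]
      rw [Finset.not_nonempty_iff_eq_empty.mp hb, Finset.card_empty]
  have hdel_le : ∀ b : F, del b ≤ 2 := by
    intro b; rcases hdelcases b with h | h | h <;> omega
  have hsum : ∑ b : F, del b = 3 ^ n := by
    have hstep := Finset.card_eq_sum_card_fiberwise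
      (f := f) (s := (univ : Finset F)) (t := (univ : Finset F))
      (fun x _ => mem_univ (f x))
    rw [Finset.card_univ, hF] at hstep
    simp only [hdel]
    exact hstep.symm
  have hS1 : univ.filter (fun b => del b = 1) = {f 1} := by
    ext b
    simp only [mem_filter, mem_univ, true_and, mem_singleton]
    constructor
    · intro h1
      have hpos : 0 < (univ.filter (fun x => f x = b)).card := by
        simp only [hdel] at h1
        omega
      obtain ⟨x, hx⟩ := Finset.card_pos.mp hpos
      have hfx : f x = b := (mem_filter.mp hx).2
      by_cases hx1 : x = 1
      · rw [← hfx, hx1]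
      · exact absurd h1 (by rw [hdel2 b x hfx hx1]; omega)
    · intro h1; rw [h1]; exact hdel1
  have hsplit : ∀ b : F, del b =
      (if del b = 1 then 1 else 0) + 2 * (if del b = 2 then 1 else 0) := by
    intro b
    rcases hdelcases b with h | h | h <;> rw [h] <;> norm_num
  have hcount : 3 ^ n = (univ.filter (fun b => del b = 1)).card
      + 2 * (univ.filter (fun b => del b = 2)).card := by
    rw [← hsum, Finset.card_filter, Finset.card_filter, Finset.mul_sum,
      ← Finset.sum_add_distrib]
    exact Finset.sum_congr rfl fun b _ => hsplit b
  have hcount2 : 3 ^ n = 1 + 2 * (univ.filter (fun b => del b = 2)).card := by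
    rw [hcount, hS1, Finset.card_singleton]
  have hsplit3 : ∀ b : F, (1 : ℕ) =
      (if del b = 0 then 1 else 0) + (if del b = 1 then 1 else 0)
        + (if del b = 2 then 1 else 0) := by
    intro b
    rcases hdelcases b with h | h | h <;> rw [h] <;> norm_num
  have hcount3 : 3 ^ n = (univ.filter (fun b => del b = 0)).card
      + (univ.filter (fun b => del b = 1)).card
      + (univ.filter (fun b => del b = 2)).card := by
    have h1s : ∑ _b : F, (1 : ℕ) = 3 ^ n := by
      rw [Finset.sum_const, smul_eq_mul, mul_one, Finset.card_univ, hF]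
    rw [← h1s, Finset.card_filter, Finset.card_filter, Finset.card_filter,
      ← Finset.sum_add_distrib, ← Finset.sum_add_distrib]
    exact Finset.sum_congr rfl fun b _ => hsplit3 b
  have hw1 : (univ.filter (fun b => del b = 1)).card = 1 := by
    rw [hS1, Finset.card_singleton]
  refine ⟨?_, ?_, ?_, ?_, ?_, ?_⟩
  · rw [hco 0]; omega
  · rw [hco 1]; exact hw1
  · rw [hco 2]; omega
  · intro i hi
    rw [hco i]
    rw [Finset.filter_eq_empty_iff.mpr fun b _ => by have := hdel_le b; omega]
    exact Finset.card_empty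
  · intro b
    rw [hcd b]
    exact hdel_le b
  · refine ⟨f 0, ?_⟩
    rw [hcd (f 0)]
    exact hdel2 (f 0) 0 rfl (by exact fun h => one_ne_zero h.symm)
end
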